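/- Let π be the symbol permutation on words of length n over {0, a, 1} that fixes a and swaps 0↔1, composed with rotation by l. If n/gcd(n,l) is odd then the only word fixed by πr^l is the constant word aa…a; if n/gcd(n,l) is even then exactly 3^{gcd(n,l)} words are fixed. -/

import Mathlib

namespace FRW

/-- apply `x ↦ 2 - x` on `Fin 3`, `k` times -/
def pit (k : ℕ) (x : Fin 3) : Fin 3 := if Even k then x else 2 - x

lemma two_sub_two_sub (x : Fin 3) : 2 - (2 - x) = x := by revert x; decide

lemma pit_parity {k k' : ℕ} (h : Even k ↔ Even k') (x : Fin 3) : pit k x = pit k' x := by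
  by_cases hk : Even k <;> by_cases hk' : Even k' <;>
    simp [pit, hk, hk'] <;> tauto

lemma pit_two_sub (k : ℕ) (x : Fin 3) : pit k (2 - x) = pit (k+1) x := by
  by_cases hk : Even k <;>
    simp [pit, hk, Nat.even_add_one, two_sub_two_sub]

lemma two_sub_pit (k : ℕ) (x : Fin 3) : 2 - pit k x = pit (k+1) x := by
  by_cases hk : Even k <;>
    simp [pit, hk, Nat.even_add_one, two_sub_two_sub]

lemma pit_inj (k : ℕ) : Function.Injective (pit k) := by
  intro x y h
  by_cases hk : Even k
  · simpa [pit, hk] using h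
  · simp only [pit, hk, if_false] at h
    have := congrArg (fun z => 2 - z) h
    simpa [two_sub_two_sub] using this

end FRW

open Finset

open Fin.CommRing

open FRW in
theorem flip_rotation_fixed_words_ternary (n : ℕ) [NeZero n] (l : Fin n) :
    (Odd (n / Nat.gcd n l.val) →
      ∀ w : Fin n → Fin 3, (∀ i : Fin n, w i = 2 - w (i + l)) ↔ w = fun _ => 1) ∧
    (Even (n / Nat.gcd n l.val) →
      Nat.card {w : Fin n → Fin 3 // ∀ i : Fin n, w i = 2 - w (i + l)} =
        3 ^ Nat.gcd n l.val) := by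
  obtain ⟨n, rfl⟩ := Nat.exists_eq_succ_of_ne_zero (NeZero.ne n)
  set d := Nat.gcd (n+1) l.val with hd
  set m := (n+1)/d with hm
  have hd0 : 0 < d := Nat.gcd_pos_of_pos_left _ n.succ_pos
  have hdn : d ∣ n+1 := Nat.gcd_dvd_left _ _
  have hdl : d ∣ l.val := Nat.gcd_dvd_right _ _
  have hmd : d * m = n+1 := Nat.mul_div_cancel' hdn
  have hdle : d ≤ n+1 := Nat.le_of_dvd n.succ_pos hdn
  -- iteration lemma
  have iter : ∀ w : Fin (n+1) → Fin 3, (∀ i : Fin (n+1), w i = 2 - w (i + l)) →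
      ∀ (k : ℕ) (i : Fin (n+1)), w i = pit k (w (i + (k : Fin (n+1)) * l)) := by
    intro w hw k
    induction k with
    | zero => intro i; simp [pit]
    | succ k ih =>
      intro i
      rw [ih i, hw (i + (k : Fin (n+1)) * l), pit_two_sub]
      have : i + (k : Fin (n+1)) * l + l = i + ((k+1 : ℕ) : Fin (n+1)) * l := by
        push_cast; ring
      rw [this]
  -- cancellation
  have cancel : ∀ k k' : ℕ, (k : Fin (n+1)) * l = (k' : Fin (n+1)) * l →
      k ≡ k' [MOD m] := by
    intro k k' h
    have hv : k * l.val ≡ k' * l.val [MOD n+1] := by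
      have := congrArg Fin.val h
      simpa [Fin.val_mul, Fin.val_natCast, Nat.mod_mul_mod, Nat.ModEq] using this
    simpa [hd, hm] using Nat.ModEq.cancel_right_div_gcd n.succ_pos hv
  have hml : ((m : Fin (n+1)) : Fin (n+1)) * l = 0 := by
    obtain ⟨l', hl'⟩ := hdl
    have hdvd : (n+1) ∣ m * l.val := ⟨l', by rw [hl', ← hmd]; ring⟩
    apply Fin.ext
    simp [Fin.val_mul, Fin.val_natCast, Nat.mod_mul_mod, Nat.eq_zero_of_dvd_of_lt,
      Nat.mod_eq_zero_of_dvd hdvd]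
  -- Bezout: some multiple of l equals d
  have hB : ∃ k : ℕ, (k : Fin (n+1)) * l = (d : Fin (n+1)) := by
    have hgcd := Nat.gcd_eq_gcd_ab (n+1) l.val
    set B := Nat.gcdB (n+1) l.val with hBdef
    refine ⟨(B % (n+1)).toNat, ?_⟩
    have hnn : (0:ℤ) ≤ B % (n+1) := Int.emod_nonneg _ (by positivity)
    have h1 : (((B % (n+1)).toNat : ℕ) : Fin (n+1)) = ((B : ℤ) : Fin (n+1)) := by
      have : (((B % (n+1)).toNat : ℤ) : Fin (n+1)) = ((B % (n+1) : ℤ) : Fin (n+1)) := by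
        rw [Int.toNat_of_nonneg hnn]
      rw [← Int.cast_natCast, this, Int.emod_def]
      push_cast
      simp [Fin.natCast_self]
    rw [h1]
    have h2 : (d : Fin (n+1)) = (((d : ℕ) : ℤ) : Fin (n+1)) := by push_cast; rfl
    rw [h2, hgcd]
    push_cast
    simp [Fin.natCast_self, Fin.cast_val_eq_self]
    ring
  -- decomposition
  have hK : ∀ i : Fin (n+1), ∃ k : ℕ,
      i = ((i.val % d : ℕ) : Fin (n+1)) + (k : Fin (n+1)) * l := by
    obtain ⟨k0, hk0⟩ := hB
    intro i
    refine ⟨i.val / d * k0, ?_⟩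
    have h1 : ((i.val / d * k0 : ℕ) : Fin (n+1)) * l
        = ((i.val / d : ℕ) : Fin (n+1)) * (d : Fin (n+1)) := by
      rw [Nat.cast_mul, mul_assoc, hk0]
    rw [h1, ← Nat.cast_mul, ← Nat.cast_add, Nat.mod_add_div']
    exact (Fin.cast_val_eq_self i).symm
  constructor
  · -- odd case
    intro hodd w
    constructor
    · intro hw
      funext i
      have h1 := iter w hw m i
      rw [hml, add_zero] at h1
      have hne : ¬ Even m := Nat.not_even_iff_odd.mpr hodd
      simp only [pit, hne, if_false] at h1
      have key : ∀ x : Fin 3, x = 2 - x → x = 1 := by decide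
      exact key _ h1
    · rintro rfl i
      show (1 : Fin 3) = 2 - (1 : Fin 3)
      decide
  · -- even case
    intro heven
    have h2m : 2 ∣ m := heven.two_dvd
    have parity_of_modeq : ∀ k k' : ℕ, k ≡ k' [MOD m] → (Even k ↔ Even k') := by
      intro k k' h
      have := h.of_dvd h2m
      simp only [Nat.ModEq] at this
      constructor <;> intro he <;> rw [Nat.even_iff] at he ⊢ <;> omega
    choose K hKspec using hK
    set F : {w : Fin (n+1) → Fin 3 // ∀ i : Fin (n+1), w i = 2 - w (i + l)} →
        (Fin d → Fin 3) := fun w j => w.1 (Fin.castLE hdle j) with hF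
    have castLE_eq : ∀ i : Fin (n+1),
        ((i.val % d : ℕ) : Fin (n+1)) = Fin.castLE hdle ⟨i.val % d, Nat.mod_lt _ hd0⟩ := by
      intro i
      apply Fin.ext
      simp [Fin.val_natCast, Nat.mod_eq_of_lt (lt_of_lt_of_le (Nat.mod_lt _ hd0) hdle)]
    have hinj : Function.Injective F := by
      intro w w' h
      apply Subtype.ext
      funext i
      have h1 := iter w.1 w.2 (K i) ((i.val % d : ℕ) : Fin (n+1))
      have h2 := iter w'.1 w'.2 (K i) ((i.val % d : ℕ) : Fin (n+1))
      rw [← hKspec i] at h1 h2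
      have : w.1 ((i.val % d : ℕ) : Fin (n+1)) = w'.1 ((i.val % d : ℕ) : Fin (n+1)) := by
        rw [castLE_eq i]
        exact congrFun h ⟨i.val % d, Nat.mod_lt _ hd0⟩
      rw [this, h2] at h1
      exact (pit_inj _ h1).symm
    have hsurj : Function.Surjective F := by
      intro f
      set w : Fin (n+1) → Fin 3 :=
        fun i => pit (K i) (f ⟨i.val % d, Nat.mod_lt _ hd0⟩) with hw
      have hmodadd : ∀ i : Fin (n+1), (i + l).val % d = i.val % d := by
        intro i
        obtain ⟨l', hl'⟩ := hdl
        rw [Fin.val_add, Nat.mod_mod_of_dvd _ hdn, hl', Nat.add_mul_mod_self_left]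
      have hCw : ∀ i : Fin (n+1), w i = 2 - w (i + l) := by
        intro i
        have hs1 := hKspec i
        have hs2 := hKspec (i + l)
        rw [show (((i+l).val % d : ℕ) : Fin (n+1)) = ((i.val % d : ℕ) : Fin (n+1)) by
          rw [hmodadd i]] at hs2
        have heq : ((K i + 1 : ℕ) : Fin (n+1)) * l = ((K (i+l) : ℕ) : Fin (n+1)) * l := by
          have : ((i.val % d : ℕ) : Fin (n+1)) + (K i : Fin (n+1)) * l + l
              = ((i.val % d : ℕ) : Fin (n+1)) + (K (i+l) : Fin (n+1)) * l := by
            rw [← hs1, ← hs2]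
          have := add_left_cancel (a := ((i.val % d : ℕ) : Fin (n+1)))
            (by rw [← add_assoc]; exact this :
              ((i.val % d : ℕ) : Fin (n+1)) + ((K i : Fin (n+1)) * l + l)
              = ((i.val % d : ℕ) : Fin (n+1)) + (K (i+l) : Fin (n+1)) * l)
          push_cast
          rw [add_mul, one_mul]
          exact this
        have h3 := parity_of_modeq _ _ (cancel _ _ heq)
        have hpar : Even (K i) ↔ Even (K (i+l) + 1) := by
          rw [Nat.even_add_one] at h3 ⊢
          tauto
        show pit (K i) _ = 2 - pit (K (i+l)) _
        rw [show (⟨(i+l).val % d, Nat.mod_lt _ hd0⟩ : Fin d)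
            = ⟨i.val % d, Nat.mod_lt _ hd0⟩ by exact Fin.ext (hmodadd i)]
        rw [two_sub_pit]
        exact pit_parity hpar _
      refine ⟨⟨w, hCw⟩, ?_⟩
      funext j
      show w (Fin.castLE hdle j) = f j
      have hi : ((Fin.castLE hdle j).val % d : ℕ) = j.val :=
        Nat.mod_eq_of_lt j.isLt
      have hKe : Even (K (Fin.castLE hdle j)) := by
        have hs := hKspec (Fin.castLE hdle j)
        rw [show (((Fin.castLE hdle j).val % d : ℕ) : Fin (n+1)) = Fin.castLE hdle j by
          rw [hi]; apply Fin.ext;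
          simp [Fin.val_natCast, Nat.mod_eq_of_lt (lt_of_lt_of_le j.isLt hdle)]] at hs
        have h0 : ((K (Fin.castLE hdle j) : ℕ) : Fin (n+1)) * l
            = ((0 : ℕ) : Fin (n+1)) * l := by
          have := (left_eq_add.mp hs)
          simpa using this
        have := parity_of_modeq _ _ (cancel _ _ h0)
        simpa using this
      show pit _ (f _) = f j
      rw [show (⟨(Fin.castLE hdle j).val % d, Nat.mod_lt _ hd0⟩ : Fin d) = j by
        exact Fin.ext hi]
      simp [pit, hKe]
    have e : {w : Fin (n+1) → Fin 3 // ∀ i : Fin (n+1), w i = 2 - w (i + l)}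
        ≃ (Fin d → Fin 3) := Equiv.ofBijective F ⟨hinj, hsurj⟩
    rw [Nat.card_congr e]
    simp [Nat.card_eq_fintype_card]
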